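/- Assume (A1) and (A2). Let M1 be a menu with M1 ⊆ M_NR, and let M2 be a menu with M2 ⊄ M_NR. Then M2 does not Pareto-dominate M1. -/

import Mathlib

open Finset

noncomputable section

/-- The product CSP `x ⊗ y`. -/
def prodCSP {m n : ℕ} (x : Fin m → ℝ) (y : Fin n → ℝ) : Fin m × Fin n → ℝ :=
  fun p => x p.1 * y p.2

/-- The `j`-th vertex `e_j` of a simplex. -/
def pureVec {k : ℕ} (j : Fin k) : Fin k → ℝ := fun j' => if j' = j then 1 else 0

/-- Linear extension of a payoff to CSPs. -/
def linCSP {m n : ℕ} (u : Fin m → Fin n → ℝ) (φ : Fin m × Fin n → ℝ) : ℝ :=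
  ∑ p : Fin m × Fin n, φ p * u p.1 p.2

/-- Payoff the learner would get by always deviating to the pure action `j'`. -/
def devCSP {m n : ℕ} (u : Fin m → Fin n → ℝ) (φ : Fin m × Fin n → ℝ) (j' : Fin n) : ℝ :=
  ∑ p : Fin m × Fin n, φ p * u p.1 j'

/-- Bilinear extension of a payoff to mixed strategies. -/
def mixPay {m n : ℕ} (u : Fin m → Fin n → ℝ) (x : Fin m → ℝ) (y : Fin n → ℝ) : ℝ :=
  ∑ i, ∑ j, x i * y j * u i j

/-- Pure best responses of the learner to the optimizer mixed strategy `x`. -/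
def BRL {m n : ℕ} (u : Fin m → Fin n → ℝ) (x : Fin m → ℝ) : Set (Fin n) :=
  {j | ∀ j' : Fin n, (∑ i, x i * u i j') ≤ ∑ i, x i * u i j}

/-- A CSP is no-regret. -/
def NoRegret {m n : ℕ} (u : Fin m → Fin n → ℝ) (φ : Fin m × Fin n → ℝ) : Prop :=
  ∀ j' : Fin n, devCSP u φ j' ≤ linCSP u φ

/-- A CSP is no-swap-regret. -/
def NoSwapRegret {m n : ℕ} (u : Fin m → Fin n → ℝ) (φ : Fin m × Fin n → ℝ) : Prop :=
  ∀ j j' : Fin n, (∑ i, φ (i, j) * u i j') ≤ ∑ i, φ (i, j) * u i j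

/-- The no-regret menu: all no-regret CSPs. -/
def MNR {m n : ℕ} (u : Fin m → Fin n → ℝ) : Set (Fin m × Fin n → ℝ) :=
  {φ | φ ∈ stdSimplex ℝ (Fin m × Fin n) ∧ NoRegret u φ}

/-- The no-swap-regret menu: all no-swap-regret CSPs. -/
def MNSR {m n : ℕ} (u : Fin m → Fin n → ℝ) : Set (Fin m × Fin n → ℝ) :=
  {φ | φ ∈ stdSimplex ℝ (Fin m × Fin n) ∧ NoSwapRegret u φ}

/-- A menu: a closed convex subset of the simplex of CSPs such that every optimizer
mixed strategy has some product response inside the set. -/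
def IsMenu {m n : ℕ} (M : Set (Fin m × Fin n → ℝ)) : Prop :=
  IsClosed M ∧ Convex ℝ M ∧ M ⊆ stdSimplex ℝ (Fin m × Fin n) ∧
    ∀ x ∈ stdSimplex ℝ (Fin m), ∃ y ∈ stdSimplex ℝ (Fin n), prodCSP x y ∈ M

/-- The learner's value when the optimizer with payoff `uO` picks their favorite point
of the menu `M`, breaking ties in the learner's favor. -/
def VL {m n : ℕ} (uL uO : Fin m → Fin n → ℝ) (M : Set (Fin m × Fin n → ℝ)) : ℝ :=
  sSup (linCSP uL '' {φ ∈ M | ∀ ψ ∈ M, linCSP uO ψ ≤ linCSP uO φ})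

/-- `M'` Pareto-dominates `M` (for the learner payoff `uL`). -/
def ParetoDominates {m n : ℕ} (uL : Fin m → Fin n → ℝ)
    (M' M : Set (Fin m × Fin n → ℝ)) : Prop :=
  (∀ uO : Fin m → Fin n → ℝ, VL uL uO M ≤ VL uL uO M') ∧
    ∃ uO : Fin m → Fin n → ℝ, VL uL uO M < VL uL uO M'

/-- A menu is Pareto-optimal if it is a menu and no menu Pareto-dominates it. -/
def ParetoOptimal {m n : ℕ} (uL : Fin m → Fin n → ℝ) (M : Set (Fin m × Fin n → ℝ)) : Prop :=
  IsMenu M ∧ ∀ M' : Set (Fin m × Fin n → ℝ), IsMenu M' → ¬ ParetoDominates uL M' M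

/-- (A2): no weakly dominated learner actions. -/
def A2cond {m n : ℕ} (u : Fin m → Fin n → ℝ) : Prop :=
  ∀ j : Fin n, (∃ x ∈ stdSimplex ℝ (Fin m), j ∈ BRL u x) →
    ∃ x' ∈ stdSimplex ℝ (Fin m), BRL u x' = {j}

/-- `U^-(M)`: the minimal learner utility over `M`. -/
def UminusVal {m n : ℕ} (u : Fin m → Fin n → ℝ) (M : Set (Fin m × Fin n → ℝ)) : ℝ :=
  sInf (linCSP u '' M)

/-- `U^+(M)`: the maximal learner utility over `M`. -/
def UplusVal {m n : ℕ} (u : Fin m → Fin n → ℝ) (M : Set (Fin m × Fin n → ℝ)) : ℝ :=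
  sSup (linCSP u '' M)

/-- `M^-`: the set of learner-utility-minimizing points of `M`. -/
def MminusSet {m n : ℕ} (u : Fin m → Fin n → ℝ) (M : Set (Fin m × Fin n → ℝ)) :
    Set (Fin m × Fin n → ℝ) :=
  {φ ∈ M | linCSP u φ = UminusVal u M}

/-- `M^+`: the set of learner-utility-maximizing points of `M`. -/
def MplusSet {m n : ℕ} (u : Fin m → Fin n → ℝ) (M : Set (Fin m × Fin n → ℝ)) :
    Set (Fin m × Fin n → ℝ) :=
  {φ ∈ M | linCSP u φ = UplusVal u M}

/-- The zero-sum value `U_ZS = min_x max_y u_L(x,y)`. -/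
def UZSval {m n : ℕ} (u : Fin m → Fin n → ℝ) : ℝ :=
  sInf ((fun x => sSup ((fun y => mixPay u x y) '' stdSimplex ℝ (Fin n))) ''
    stdSimplex ℝ (Fin m))

/- ---------------------------------------------------------------------------
Auxiliary lemmas for Statement 8.
--------------------------------------------------------------------------- -/

section Aux

variable {m n : ℕ}

lemma continuous_linCSP (u : Fin m → Fin n → ℝ) : Continuous (linCSP u) :=
  continuous_finset_sum _ fun p _ => (continuous_apply p).mul continuous_const

lemma continuous_devCSP (u : Fin m → Fin n → ℝ) (j : Fin n) :
    Continuous (fun φ => devCSP u φ j) :=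
  continuous_finset_sum _ fun p _ => (continuous_apply p).mul continuous_const

lemma weighted_le_one {ι : Type*} [Fintype ι] {φ f : ι → ℝ}
    (h0 : ∀ p, 0 ≤ φ p) (h1 : ∑ p, φ p = 1) (hf : ∀ p, f p ≤ 1) :
    ∑ p, φ p * f p ≤ 1 := by
  calc ∑ p, φ p * f p ≤ ∑ p, φ p :=
        Finset.sum_le_sum fun p _ => mul_le_of_le_one_right (h0 p) (hf p)
    _ = 1 := h1

lemma neg_one_le_weighted {ι : Type*} [Fintype ι] {φ f : ι → ℝ}
    (h0 : ∀ p, 0 ≤ φ p) (h1 : ∑ p, φ p = 1) (hf : ∀ p, -1 ≤ f p) :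
    -1 ≤ ∑ p, φ p * f p := by
  have h : ∑ p, φ p * (-1 : ℝ) ≤ ∑ p, φ p * f p :=
    Finset.sum_le_sum fun p _ => mul_le_mul_of_nonneg_left (hf p) (h0 p)
  have h2 : ∑ p, φ p * (-1 : ℝ) = -1 := by
    rw [← Finset.sum_mul, h1, one_mul]
  linarith

lemma marginal_mem {φ : Fin m × Fin n → ℝ} (hφ : φ ∈ stdSimplex ℝ (Fin m × Fin n)) :
    (fun i => ∑ j, φ (i, j)) ∈ stdSimplex ℝ (Fin m) := by
  constructor
  · exact fun i => Finset.sum_nonneg fun j _ => hφ.1 (i, j)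
  · rw [← hφ.2]
    exact (Fintype.sum_prod_type _).symm

lemma devCSP_marg (u : Fin m → Fin n → ℝ) (φ : Fin m × Fin n → ℝ) (j : Fin n) :
    devCSP u φ j = ∑ i, (∑ j', φ (i, j')) * u i j := by
  unfold devCSP
  rw [Fintype.sum_prod_type]
  refine Finset.sum_congr rfl fun i _ => ?_
  show (∑ j', φ (i, j') * u i j) = (∑ j', φ (i, j')) * u i j
  exact (Finset.sum_mul _ _ _).symm

lemma prodCSP_mem {x : Fin m → ℝ} {y : Fin n → ℝ}
    (hx : x ∈ stdSimplex ℝ (Fin m)) (hy : y ∈ stdSimplex ℝ (Fin n)) :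
    prodCSP x y ∈ stdSimplex ℝ (Fin m × Fin n) := by
  constructor
  · exact fun p => mul_nonneg (hx.1 p.1) (hy.1 p.2)
  · rw [Fintype.sum_prod_type]
    have : ∀ i, ∑ j, prodCSP x y (i, j) = x i := by
      intro i
      show (∑ j, x i * y j) = x i
      rw [← Finset.mul_sum, hy.2, mul_one]
    rw [Finset.sum_congr rfl fun i _ => this i, hx.2]

lemma devCSP_prod (u : Fin m → Fin n → ℝ) {x : Fin m → ℝ} {y : Fin n → ℝ}
    (hy : ∑ j, y j = 1) (j' : Fin n) :
    devCSP u (prodCSP x y) j' = ∑ i, x i * u i j' := by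
  unfold devCSP prodCSP
  rw [Fintype.sum_prod_type]
  refine Finset.sum_congr rfl fun i _ => ?_
  calc ∑ j, x i * y j * u i j' = ∑ j, y j * (x i * u i j') :=
        Finset.sum_congr rfl fun j _ => by ring
    _ = (∑ j, y j) * (x i * u i j') := (Finset.sum_mul _ _ _).symm
    _ = x i * u i j' := by rw [hy, one_mul]

lemma linCSP_prod (u : Fin m → Fin n → ℝ) (x : Fin m → ℝ) (y : Fin n → ℝ) :
    linCSP u (prodCSP x y) = ∑ j, y j * ∑ i, x i * u i j := by
  unfold linCSP prodCSP
  rw [Fintype.sum_prod_type, Finset.sum_comm]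
  refine Finset.sum_congr rfl fun j _ => ?_
  rw [Finset.mul_sum]
  exact Finset.sum_congr rfl fun i _ => by ring

lemma pureVec_mem {k : ℕ} (j : Fin k) : pureVec j ∈ stdSimplex ℝ (Fin k) := by
  constructor
  · intro x
    unfold pureVec
    split <;> norm_num
  · simp [pureVec]

end Aux

set_option maxHeartbeats 1600000 in
/-- Assume (A1) and (A2). A menu that is not contained in the no-regret menu
cannot Pareto-dominate a menu contained in the no-regret menu. -/
theorem high_regret_menu_does_not_dominate_no_regret_menu
    (m n : ℕ) (hm : 0 < m) (hn : 0 < n)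
    (uL : Fin m → Fin n → ℝ) (hbound : ∀ i j, uL i j ∈ Set.Icc (-1 : ℝ) 1)
    (istar : Fin m) (jstar : Fin n)
    (hA1 : ∀ p : Fin m × Fin n, p ≠ (istar, jstar) → uL p.1 p.2 < uL istar jstar)
    (hA2 : A2cond uL)
    (M1 M2 : Set (Fin m × Fin n → ℝ))
    (hM1 : IsMenu M1) (h1sub : M1 ⊆ MNR uL)
    (hM2 : IsMenu M2) (h2nsub : ¬ M2 ⊆ MNR uL) :
    ¬ ParetoDominates uL M2 M1 := by
  rintro ⟨hweak, -⟩
  haveI : Nonempty (Fin n) := ⟨⟨0, hn⟩⟩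
  obtain ⟨hM1closed, -, hM1sub, hM1menu⟩ := hM1
  obtain ⟨hM2closed, -, hM2sub, hM2menu⟩ := hM2
  -- a point of M2 with positive regret
  obtain ⟨φ₀, hφ₀M2, hφ₀n⟩ := Set.not_subset.mp h2nsub
  have hφ₀simp : φ₀ ∈ stdSimplex ℝ (Fin m × Fin n) := hM2sub hφ₀M2
  have hφ₀reg : ¬ NoRegret uL φ₀ := fun h => hφ₀n ⟨hφ₀simp, h⟩
  unfold NoRegret at hφ₀reg
  push_neg at hφ₀reg
  obtain ⟨j₁, hj₁⟩ := hφ₀reg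
  -- compactness
  have hcomp2 : IsCompact M2 := (isCompact_stdSimplex ℝ _).of_isClosed_subset hM2closed hM2sub
  have hne2 : M2.Nonempty := ⟨φ₀, hφ₀M2⟩
  have hcomp1 : IsCompact M1 := (isCompact_stdSimplex ℝ _).of_isClosed_subset hM1closed hM1sub
  have hne1 : M1.Nonempty := by
    obtain ⟨y, -, hin⟩ := hM1menu (pureVec ⟨0, hm⟩) (pureVec_mem _)
    exact ⟨_, hin⟩
  -- for each j, a maximizer of the regret functional dev_j - lin over M2
  have hmax : ∀ j : Fin n, ∃ ψ ∈ M2, ∀ φ ∈ M2,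
      devCSP uL φ j - linCSP uL φ ≤ devCSP uL ψ j - linCSP uL ψ := by
    intro j
    obtain ⟨ψ, hψ, hmax⟩ := hcomp2.exists_isMaxOn hne2
      (((continuous_devCSP uL j).sub (continuous_linCSP uL)).continuousOn)
    exact ⟨ψ, hψ, fun φ hφ => hmax hφ⟩
  choose ψ hψmem hψmax using hmax
  set ρ : Fin n → ℝ := fun j => devCSP uL (ψ j) j - linCSP uL (ψ j) with hρdef
  obtain ⟨jd, -, hjd⟩ := Finset.exists_max_image Finset.univ ρ Finset.univ_nonempty
  set φs := ψ jd with hφsdef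
  set ρs := ρ jd with hρsdef
  have hρpos : 0 < ρs := by
    have h1 : devCSP uL φ₀ j₁ - linCSP uL φ₀ ≤ ρ j₁ := hψmax j₁ φ₀ hφ₀M2
    have h2 : ρ j₁ ≤ ρs := hjd j₁ (Finset.mem_univ _)
    linarith
  have hφssimp : φs ∈ stdSimplex ℝ (Fin m × Fin n) := hM2sub (hψmem jd)
  -- bounds for φs
  have hρs_eq : ρs = devCSP uL φs jd - linCSP uL φs := rfl
  have hlinφs_lb : (-1 : ℝ) ≤ linCSP uL φs :=
    neg_one_le_weighted hφssimp.1 hφssimp.2 fun p => (hbound p.1 p.2).1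
  have hdevφs_ub : devCSP uL φs jd ≤ 1 :=
    weighted_le_one hφssimp.1 hφssimp.2 fun p => (hbound p.1 jd).2
  have hρs2 : ρs ≤ 2 := by rw [hρs_eq]; linarith
  -- jd is a best response to the marginal of φs
  set xs : Fin m → ℝ := fun i => ∑ j, φs (i, j) with hxsdef
  have hxsmem : xs ∈ stdSimplex ℝ (Fin m) := marginal_mem hφssimp
  have hBRxs : jd ∈ BRL uL xs := by
    simp only [BRL, Set.mem_setOf_eq]
    intro j'
    have h1 : devCSP uL φs j' - linCSP uL φs ≤ ρ j' := hψmax j' φs (hψmem jd)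
    have h2 : ρ j' ≤ ρs := hjd j' (Finset.mem_univ _)
    have h3 : devCSP uL φs j' ≤ devCSP uL φs jd := by rw [hρs_eq] at h2; linarith
    rw [devCSP_marg, devCSP_marg] at h3
    exact h3
  -- (A2): a mixed strategy where jd is the strictly unique best response
  obtain ⟨x'', hx''mem, hx''BR⟩ := hA2 jd ⟨xs, hxsmem, hBRxs⟩
  have hjdBR'' : jd ∈ BRL uL x'' := by rw [hx''BR]; rfl
  -- strict margin at x''
  set μ : ℝ := Finset.univ.inf' Finset.univ_nonempty
      (fun j => if j = jd then 1 else (∑ i, x'' i * uL i jd) - ∑ i, x'' i * uL i j) with hμdef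
  have hμpos : 0 < μ := by
    rw [hμdef, Finset.lt_inf'_iff]
    intro j _
    by_cases hj : j = jd
    · simp [hj]
    · simp only [hj, if_false]
      have hnot : j ∉ BRL uL x'' := by
        rw [hx''BR]
        simpa using hj
      simp only [BRL, Set.mem_setOf_eq] at hnot
      push_neg at hnot
      obtain ⟨j', hj'⟩ := hnot
      have := hjdBR'' j'
      linarith
  have hμle1 : μ ≤ 1 := by
    rw [hμdef]
    refine le_trans (Finset.inf'_le
      (fun j => if j = jd then (1:ℝ) else (∑ i, x'' i * uL i jd) - ∑ i, x'' i * uL i j)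
      (Finset.mem_univ jd)) ?_
    simp
  -- the supremum S
  set T : Set ℝ := (fun x : Fin m → ℝ => ∑ i, x i * uL i jd) ''
      {x | x ∈ stdSimplex ℝ (Fin m) ∧ jd ∈ BRL uL x} with hTdef
  have hTne : T.Nonempty := ⟨_, ⟨xs, ⟨hxsmem, hBRxs⟩, rfl⟩⟩
  have hTbdd : BddAbove T := by
    refine ⟨1, ?_⟩
    rintro t ⟨x, ⟨hx, -⟩, rfl⟩
    exact weighted_le_one hx.1 hx.2 fun i => (hbound i jd).2
  set S : ℝ := sSup T with hSdef
  -- parameters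
  set δ : ℝ := min (ρs / 4) (μ * ρs / 8) with hδdef
  have hδpos : 0 < δ := lt_min (by linarith) (by positivity)
  have hδ4 : δ ≤ ρs / 4 := min_le_left _ _
  set A : ℝ := 2 / δ with hAdef
  have hApos : 0 < A := by positivity
  have hAδ : A * δ = 2 := by
    rw [hAdef]
    field_simp
  -- the optimizer utility
  set uO : Fin m → Fin n → ℝ := fun i j => A * (uL i jd - uL i j) + uL i j with huOdef
  have hlinO : ∀ φ, linCSP uO φ
      = A * (devCSP uL φ jd - linCSP uL φ) + linCSP uL φ := by
    intro φ
    have h : linCSP uO φ = ∑ p : Fin m × Fin n,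
        (A * (φ p * uL p.1 jd) - A * (φ p * uL p.1 p.2) + φ p * uL p.1 p.2) := by
      refine Finset.sum_congr rfl fun p _ => ?_
      simp only [huOdef]
      ring
    rw [h, Finset.sum_add_distrib, Finset.sum_sub_distrib, ← Finset.mul_sum, ← Finset.mul_sum]
    unfold devCSP linCSP
    ring
  -- key point of M1 over any x to which jd is a best response
  have hM1point : ∀ x, x ∈ stdSimplex ℝ (Fin m) → jd ∈ BRL uL x →
      ∃ φ' ∈ M1, linCSP uO φ' = ∑ i, x i * uL i jd := by
    intro x hx hBR
    obtain ⟨y, hy, hin⟩ := hM1menu x hx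
    refine ⟨prodCSP x y, hin, ?_⟩
    have hNR : NoRegret uL (prodCSP x y) := (h1sub hin).2
    have hdev : devCSP uL (prodCSP x y) jd = ∑ i, x i * uL i jd := devCSP_prod uL hy.2 jd
    simp only [BRL, Set.mem_setOf_eq] at hBR
    have hlinle : linCSP uL (prodCSP x y) ≤ ∑ i, x i * uL i jd := by
      rw [linCSP_prod]
      calc ∑ j, y j * ∑ i, x i * uL i j ≤ ∑ j, y j * ∑ i, x i * uL i jd :=
            Finset.sum_le_sum fun j _ => mul_le_mul_of_nonneg_left (hBR j) (hy.1 j)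
        _ = (∑ j, y j) * ∑ i, x i * uL i jd := (Finset.sum_mul _ _ _).symm
        _ = ∑ i, x i * uL i jd := by rw [hy.2, one_mul]
    have hlinge : devCSP uL (prodCSP x y) jd ≤ linCSP uL (prodCSP x y) := hNR jd
    rw [hdev] at hlinge
    have hlineq : linCSP uL (prodCSP x y) = ∑ i, x i * uL i jd := le_antisymm hlinle hlinge
    rw [hlinO, hdev, hlineq]
    ring
  -- maximizer of uO over M1
  obtain ⟨ψ₁, hψ₁mem, hψ₁max'⟩ := hcomp1.exists_isMaxOn hne1 (continuous_linCSP uO).continuousOn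
  have hψ₁max : ∀ φ ∈ M1, linCSP uO φ ≤ linCSP uO ψ₁ := fun φ hφ => hψ₁max' hφ
  have hgψ₁ : devCSP uL ψ₁ jd - linCSP uL ψ₁ ≤ 0 := by
    have := (h1sub hψ₁mem).2 jd
    linarith
  have hlinψ₁S : S ≤ linCSP uL ψ₁ := by
    refine csSup_le hTne ?_
    rintro t ⟨x, ⟨hx, hBR⟩, rfl⟩
    obtain ⟨φ', hφ'M1, hφ'val⟩ := hM1point x hx hBR
    have h1 : linCSP uO φ' ≤ linCSP uO ψ₁ := hψ₁max φ' hφ'M1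
    rw [hφ'val] at h1
    have h2 := hlinO ψ₁
    nlinarith [mul_nonpos_of_nonneg_of_nonpos hApos.le hgψ₁]
  have hVL1 : S ≤ VL uL uO M1 := by
    refine hlinψ₁S.trans (le_csSup ?_ ?_)
    · refine ⟨1, ?_⟩
      rintro t ⟨φ, ⟨hφ, -⟩, rfl⟩
      exact weighted_le_one (hM1sub hφ).1 (hM1sub hφ).2 fun p => (hbound p.1 p.2).2
    · exact ⟨ψ₁, ⟨hψ₁mem, hψ₁max⟩, rfl⟩
  -- every maximizer of uO over M2 has small learner value
  have hkey : ∀ φ ∈ M2, (∀ χ ∈ M2, linCSP uO χ ≤ linCSP uO φ) →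
      linCSP uL φ ≤ S - ρs / 2 := by
    intro φ hφ hmaxφ
    have hφsimp : φ ∈ stdSimplex ℝ (Fin m × Fin n) := hM2sub hφ
    have hlinφ_ub : linCSP uL φ ≤ 1 :=
      weighted_le_one hφsimp.1 hφsimp.2 fun p => (hbound p.1 p.2).2
    have h0 : linCSP uO φs ≤ linCSP uO φ := hmaxφ φs (hψmem jd)
    rw [hlinO, hlinO] at h0
    -- regret of φ toward jd is at least ρs - δ
    have hgφ : ρs - δ ≤ devCSP uL φ jd - linCSP uL φ := by
      rw [← hρs_eq] at h0
      have e1 : A * (ρs - δ) = A * ρs - 2 := by rw [mul_sub, hAδ]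
      have h3 : A * (ρs - δ) ≤ A * (devCSP uL φ jd - linCSP uL φ) := by
        rw [e1]
        linarith
      exact le_of_mul_le_mul_left h3 hApos
    -- jd is a δ-best-response to the marginal of φ
    have hδBR : ∀ j, devCSP uL φ j ≤ devCSP uL φ jd + δ := by
      intro j
      have h1 : devCSP uL φ j - linCSP uL φ ≤ ρ j := hψmax j φ hφ
      have h2 : ρ j ≤ ρs := hjd j (Finset.mem_univ _)
      linarith
    set x₂ : Fin m → ℝ := fun i => ∑ j, φ (i, j) with hx₂def
    have hx₂mem : x₂ ∈ stdSimplex ℝ (Fin m) := marginal_mem hφsimp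
    have hdev_eq : ∀ j, devCSP uL φ j = ∑ i, x₂ i * uL i j := fun j => devCSP_marg uL φ j
    -- mix with x''
    set s : ℝ := δ / μ with hsdef
    have hs0 : 0 < s := div_pos hδpos hμpos
    have hsμ : s * μ = δ := div_mul_cancel₀ δ hμpos.ne'
    have hs18 : s ≤ ρs / 8 := by
      rw [hsdef, div_le_iff₀ hμpos]
      calc δ ≤ μ * ρs / 8 := min_le_right _ _
        _ = ρs / 8 * μ := by ring
    have hs1 : s ≤ 1 := by linarith
    set xmix : Fin m → ℝ := fun i => (1 - s) * x₂ i + s * x'' i with hxmixdef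
    have hxmixmem : xmix ∈ stdSimplex ℝ (Fin m) := by
      constructor
      · intro i
        have := hx₂mem.1 i
        have := hx''mem.1 i
        have h1s : (0:ℝ) ≤ 1 - s := by linarith
        positivity
      · simp only [hxmixdef]
        rw [Finset.sum_add_distrib, ← Finset.mul_sum, ← Finset.mul_sum, hx₂mem.2, hx''mem.2]
        ring
    have hmixval : ∀ j, (∑ i, xmix i * uL i j)
        = (1 - s) * (∑ i, x₂ i * uL i j) + s * (∑ i, x'' i * uL i j) := by
      intro j
      rw [Finset.mul_sum, Finset.mul_sum, ← Finset.sum_add_distrib]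
      exact Finset.sum_congr rfl fun i _ => by simp only [hxmixdef]; ring
    have hBRmix : jd ∈ BRL uL xmix := by
      simp only [BRL, Set.mem_setOf_eq]
      intro j
      by_cases hj : j = jd
      · rw [hj]
      · have hmarg : μ ≤ (∑ i, x'' i * uL i jd) - ∑ i, x'' i * uL i j := by
          rw [hμdef]
          have h := Finset.inf'_le
            (fun j' => if j' = jd then (1:ℝ) else (∑ i, x'' i * uL i jd) - ∑ i, x'' i * uL i j')
            (Finset.mem_univ j)
          simpa only [hj, if_false] using h
        have ha₂ : (∑ i, x₂ i * uL i j) ≤ (∑ i, x₂ i * uL i jd) + δ := by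
          have := hδBR j
          rw [hdev_eq j, hdev_eq jd] at this
          exact this
        have h1s : (0:ℝ) ≤ 1 - s := by linarith
        rw [hmixval j, hmixval jd]
        have p1 : s * (∑ i, x'' i * uL i j) ≤ s * ((∑ i, x'' i * uL i jd) - μ) :=
          mul_le_mul_of_nonneg_left (by linarith) hs0.le
        have p2 : (1 - s) * (∑ i, x₂ i * uL i j) ≤ (1 - s) * ((∑ i, x₂ i * uL i jd) + δ) :=
          mul_le_mul_of_nonneg_left ha₂ h1s
        linarith [mul_nonneg hs0.le hδpos.le]
    have hmixle : (∑ i, xmix i * uL i jd) ≤ S :=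
      le_csSup hTbdd ⟨xmix, ⟨hxmixmem, hBRmix⟩, rfl⟩
    have hb1 : (∑ i, x₂ i * uL i jd) ≤ 1 :=
      weighted_le_one hx₂mem.1 hx₂mem.2 fun i => (hbound i jd).2
    have hb2 : (-1:ℝ) ≤ ∑ i, x'' i * uL i jd :=
      neg_one_le_weighted hx''mem.1 hx''mem.2 fun i => (hbound i jd).1
    have ha₂jd : (∑ i, x₂ i * uL i jd) ≤ S + 2 * s := by
      have hmv := hmixval jd
      have p1 : s * (∑ i, x₂ i * uL i jd) ≤ s * 1 := mul_le_mul_of_nonneg_left hb1 hs0.le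
      have p2 : s * (-1 : ℝ) ≤ s * (∑ i, x'' i * uL i jd) := mul_le_mul_of_nonneg_left hb2 hs0.le
      linarith
    have hfin : devCSP uL φ jd ≤ S + 2 * s := by rw [hdev_eq jd]; exact ha₂jd
    -- conclude
    linarith
  -- maximizer of uO over M2 exists
  obtain ⟨ψ₂, hψ₂mem, hψ₂max'⟩ := hcomp2.exists_isMaxOn hne2 (continuous_linCSP uO).continuousOn
  have hψ₂max : ∀ φ ∈ M2, linCSP uO φ ≤ linCSP uO ψ₂ := fun φ hφ => hψ₂max' hφ
  have hVL2 : VL uL uO M2 ≤ S - ρs / 2 := by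
    refine csSup_le ⟨linCSP uL ψ₂, ⟨ψ₂, ⟨hψ₂mem, hψ₂max⟩, rfl⟩⟩ ?_
    rintro t ⟨φ, ⟨hφ, hmaxφ⟩, rfl⟩
    exact hkey φ hφ hmaxφ
  have := hweak uO
  linarith
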